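/- Let g : ℝ → ℝ be bounded and measurable, let x ∈ ℝ, let t < s₁ < s₂ < T be real numbers, let r_i, r_j, r_k, α_i, α_j, α_k ∈ ℝ and σ_i, σ_j, σ_k > 0. Define r̄ = (r_i(s₁−t) + r_j(s₂−s₁) + r_k(T−s₂))/(T−t), ᾱ = (α_i(s₁−t) + α_j(s₂−s₁) + α_k(T−s₂))/(T−t), and σ̄ = √((σ_i²(s₁−t) + σ_j²(s₂−s₁) + σ_k²(T−s₂))/(T−t)). Then ∫_ℝ ∫_ℝ e^{−r_i(s₁−t) − r_j(s₂−s₁)}·V(x·exp((r_i−α_i−σ_i²/2)(s₁−t) + σ_i√(s₁−t)·z₁ + (r_j−α_j−σ_j²/2)(s₂−s₁) + σ_j√(s₂−s₁)·z₂), r_k, σ_k, T−s₂, α_k) dγ(z₁) dγ(z₂) = V(x, r̄, σ̄, T−t, ᾱ). -/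

import Mathlib

open MeasureTheory ProbabilityTheory
open scoped ENNReal NNReal

/-- The standard Gaussian measure `N(0,1)` on `ℝ`. -/
noncomputable def stdGaussian : Measure ℝ := gaussianReal 0 1

/-- `V g x r σ t α = ∫ e^{-rt} g(x e^{(r-α-σ²/2)t + σ√t z}) dγ(z)`. -/
noncomputable def V (g : ℝ → ℝ) (x r σ t α : ℝ) : ℝ :=
  ∫ z, Real.exp (-(r * t)) *
      g (x * Real.exp ((r - α - σ ^ 2 / 2) * t + σ * Real.sqrt t * z)) ∂stdGaussian

lemma integral_stdGaussian (f : ℝ → ℝ) :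
    ∫ z, f z ∂stdGaussian = ∫ z, f z * gaussianPDFReal 0 1 z := by
  rw [_root_.stdGaussian, gaussianReal_of_var_ne_zero 0 one_ne_zero]
  have h : gaussianPDF 0 1 = fun x => ((gaussianPDFReal 0 1 x).toNNReal : ℝ≥0∞) := by
    ext x; simp [gaussianPDF, ENNReal.ofReal]
  rw [h, integral_withDensity_eq_integral_smul
    ((measurable_gaussianPDFReal 0 1).real_toNNReal) f]
  congr 1; ext z
  simp [NNReal.smul_def, Real.coe_toNNReal _ (gaussianPDFReal_nonneg 0 1 z), mul_comm]

lemma pdf_scale (a w z : ℝ) (ha : a ≠ 0) :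
    gaussianPDFReal w ⟨a^2, sq_nonneg a⟩ (a * z + w) = gaussianPDFReal 0 1 z / |a| := by
  unfold ProbabilityTheory.gaussianPDFReal
  push_cast
  erw [NNReal.coe_mk]
  rw [show (2:ℝ) * Real.pi * a^2 = (2 * Real.pi) * a^2 by ring, Real.sqrt_mul (by positivity),
    Real.sqrt_sq_eq_abs]
  have h2 : -(a * z + w - w)^2 / (2 * a^2) = -(z-0)^2 / (2*1) := by
    field_simp; ring
  rw [h2]
  have : (0:ℝ) < |a| := abs_pos.mpr ha
  rw [show (2:ℝ) * Real.pi * 1 = 2 * Real.pi by ring]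
  field_simp

lemma subst_lemma (f : ℝ → ℝ) (a w : ℝ) (ha : a ≠ 0) :
    ∫ z, f (a * z + w) ∂stdGaussian = ∫ u, f u * gaussianPDFReal w ⟨a^2, sq_nonneg a⟩ u := by
  rw [integral_stdGaussian]
  have key : ∀ z : ℝ, f (a*z+w) * gaussianPDFReal 0 1 z
      = |a| * ((fun u => f u * gaussianPDFReal w ⟨a^2, sq_nonneg a⟩ u) (a * z + w)) := by
    intro z
    simp only [pdf_scale a w z ha]
    field_simp
  simp_rw [key]
  rw [integral_const_mul]
  have h1 := MeasureTheory.Measure.integral_comp_mul_left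
      (fun v => f (v + w) * gaussianPDFReal w ⟨a^2, sq_nonneg a⟩ (v + w)) a
  have h2 := MeasureTheory.integral_add_right_eq_self (μ := volume)
      (fun u => f u * gaussianPDFReal w ⟨a^2, sq_nonneg a⟩ u) w
  beta_reduce at h1 h2 ⊢
  rw [h1, h2, smul_eq_mul, ← mul_assoc, abs_inv, mul_inv_cancel₀ (by simpa using ha), one_mul]

lemma pdf_conv (a b : ℝ) (ha : a ≠ 0) (hb : b ≠ 0) (u z : ℝ) :
    gaussianPDFReal (b*z) ⟨a^2, sq_nonneg a⟩ u * gaussianPDFReal 0 1 z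
      = gaussianPDFReal 0 ⟨a^2+b^2, by positivity⟩ u *
        gaussianPDFReal (u*b/(a^2+b^2)) ⟨a^2/(a^2+b^2), by positivity⟩ z := by
  have hab : (0:ℝ) < a^2 + b^2 := by positivity
  unfold ProbabilityTheory.gaussianPDFReal
  push_cast
  erw [NNReal.coe_mk, NNReal.coe_mk, NNReal.coe_mk]
  have aux : ∀ c₁ e₁ c₂ e₂ : ℝ, c₁⁻¹ * Real.exp e₁ * (c₂⁻¹ * Real.exp e₂)
      = (c₁*c₂)⁻¹ * Real.exp (e₁+e₂) := by
    intros c₁ e₁ c₂ e₂; rw [mul_inv, Real.exp_add]; ring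
  simp only [aux, ← Real.sqrt_mul (by positivity : (0:ℝ) ≤ 2 * Real.pi * a^2),
    ← Real.sqrt_mul (by positivity : (0:ℝ) ≤ 2 * Real.pi * (a^2+b^2))]
  congr 2
  · congr 1
    field_simp
  · field_simp
    ring

lemma measurable_pdfK (a b : ℝ) :
    Measurable (fun q : ℝ × ℝ => gaussianPDFReal (b*q.1) ⟨a^2, sq_nonneg a⟩ q.2) := by
  unfold ProbabilityTheory.gaussianPDFReal
  fun_prop

lemma var_ne_zero {c : ℝ} (hc : c ≠ 0) (h : 0 ≤ c^2) : (⟨c^2, h⟩ : ℝ≥0) ≠ 0 := by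
  intro hh
  exact pow_ne_zero 2 hc (congrArg NNReal.toReal hh)


lemma pdf_conv_integral (a b : ℝ) (ha : a ≠ 0) (hb : b ≠ 0) (u : ℝ) :
    (∫ z, gaussianPDFReal (b*z) ⟨a^2, sq_nonneg a⟩ u * gaussianPDFReal 0 1 z)
      = gaussianPDFReal 0 ⟨a^2+b^2, by positivity⟩ u := by
  have hab : (0:ℝ) < a^2 + b^2 := by positivity
  have hv : (⟨a^2/(a^2+b^2), by positivity⟩ : ℝ≥0) ≠ 0 := by
    intro hh
    have := congrArg NNReal.toReal hh
    change a^2/(a^2+b^2) = 0 at this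
    exact absurd this (by positivity)
  calc (∫ z, gaussianPDFReal (b*z) ⟨a^2, sq_nonneg a⟩ u * gaussianPDFReal 0 1 z)
      = ∫ z, gaussianPDFReal 0 ⟨a^2+b^2, by positivity⟩ u *
          gaussianPDFReal (u*b/(a^2+b^2)) ⟨a^2/(a^2+b^2), by positivity⟩ z := by
        refine integral_congr_ae (ae_of_all _ fun z => ?_)
        exact pdf_conv a b ha hb u z
    _ = gaussianPDFReal 0 ⟨a^2+b^2, by positivity⟩ u := by
        rw [integral_const_mul, integral_gaussianPDFReal_eq_one _ hv, mul_one]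

set_option maxHeartbeats 1000000 in
lemma gauss_conv (f : ℝ → ℝ) (hf : Measurable f) (C : ℝ) (hC : ∀ y, |f y| ≤ C)
    (a b : ℝ) (ha : a ≠ 0) (hb : b ≠ 0) :
    ∫ z₂, ∫ z₁, f (a * z₁ + b * z₂) ∂stdGaussian ∂stdGaussian
      = ∫ z, f (Real.sqrt (a^2 + b^2) * z) ∂stdGaussian := by
  have hab : (0:ℝ) < a^2 + b^2 := by positivity
  have hva : (⟨a^2, sq_nonneg a⟩ : ℝ≥0) ≠ 0 := var_ne_zero ha _
  have h1 : ∀ z₂ : ℝ, ∫ z₁, f (a * z₁ + b * z₂) ∂stdGaussian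
      = ∫ u, f u * gaussianPDFReal (b*z₂) ⟨a^2, sq_nonneg a⟩ u :=
    fun z₂ => subst_lemma f a (b*z₂) ha
  simp_rw [h1]
  rw [integral_stdGaussian]
  have h2 : ∀ z₂ : ℝ, (∫ u, f u * gaussianPDFReal (b*z₂) ⟨a^2, sq_nonneg a⟩ u)
        * gaussianPDFReal 0 1 z₂
      = ∫ u, f u * (gaussianPDFReal (b*z₂) ⟨a^2, sq_nonneg a⟩ u * gaussianPDFReal 0 1 z₂) := by
    intro z₂
    rw [← integral_mul_const]
    congr 1; ext u; ring
  simp_rw [h2]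
  have hK : Measurable (fun q : ℝ × ℝ =>
      gaussianPDFReal (b*q.1) ⟨a^2, sq_nonneg a⟩ q.2 * gaussianPDFReal 0 1 q.1) :=
    (measurable_pdfK a b).mul ((measurable_gaussianPDFReal 0 1).comp measurable_fst)
  have hKnn : ∀ q : ℝ × ℝ,
      0 ≤ gaussianPDFReal (b*q.1) ⟨a^2, sq_nonneg a⟩ q.2 * gaussianPDFReal 0 1 q.1 :=
    fun q => mul_nonneg (gaussianPDFReal_nonneg _ _ _) (gaussianPDFReal_nonneg _ _ _)
  have hKint : Integrable (fun q : ℝ × ℝ =>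
      gaussianPDFReal (b*q.1) ⟨a^2, sq_nonneg a⟩ q.2 * gaussianPDFReal 0 1 q.1)
      (volume.prod volume) := by
    rw [integrable_prod_iff hK.aestronglyMeasurable]
    refine ⟨ae_of_all _ fun z₂ => ?_, ?_⟩
    · simp only
      exact (integrable_gaussianPDFReal _ _).mul_const _
    · have heq : ∀ z₂ : ℝ, (∫ u, ‖gaussianPDFReal (b*z₂) ⟨a^2, sq_nonneg a⟩ u
          * gaussianPDFReal 0 1 z₂‖) = gaussianPDFReal 0 1 z₂ := by
        intro z₂
        have habs : ∀ u : ℝ, ‖gaussianPDFReal (b*z₂) ⟨a^2, sq_nonneg a⟩ u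
              * gaussianPDFReal 0 1 z₂‖
            = gaussianPDFReal (b*z₂) ⟨a^2, sq_nonneg a⟩ u * gaussianPDFReal 0 1 z₂ :=
          fun u => abs_of_nonneg (hKnn (z₂, u))
        rw [integral_congr_ae (ae_of_all _ habs), integral_mul_const,
          integral_gaussianPDFReal_eq_one _ hva, one_mul]
      exact (integrable_gaussianPDFReal 0 1).congr
        (ae_of_all _ fun z₂ => (heq z₂).symm)
  have hswap := MeasureTheory.integral_integral_swap (μ := volume) (ν := volume)
    (f := fun z₂ u => f u * (gaussianPDFReal (b*z₂) ⟨a^2, sq_nonneg a⟩ u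
        * gaussianPDFReal 0 1 z₂))
    (by
      apply hKint.bdd_mul
      · exact (hf.comp measurable_snd).aestronglyMeasurable
      · exact ae_of_all _ fun q => (Real.norm_eq_abs _).trans_le (hC q.2))
  rw [hswap]
  have h3 : ∀ u : ℝ, (∫ z₂, f u * (gaussianPDFReal (b*z₂) ⟨a^2, sq_nonneg a⟩ u
        * gaussianPDFReal 0 1 z₂))
      = f u * gaussianPDFReal 0 ⟨a^2+b^2, by positivity⟩ u := by
    intro u
    rw [integral_const_mul, pdf_conv_integral a b ha hb u]
  simp_rw [h3]
  have h4 := subst_lemma f (Real.sqrt (a^2+b^2)) 0 (by positivity)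
  have hsq : (⟨(Real.sqrt (a^2+b^2))^2, sq_nonneg _⟩ : ℝ≥0)
      = (⟨a^2+b^2, by positivity⟩ : ℝ≥0) := by
    ext; simp [Real.sq_sqrt hab.le]
  rw [hsq] at h4
  rw [← h4]
  simp



/-- Two-switching identity: running with regime-`i` parameters on `[t,s₁]`, regime-`j`
parameters on `[s₁,s₂]`, and evaluating the regime-`k` value at time `s₂`, produces `V`
with parameters averaged over the three time segments. -/
theorem two_switching_identity (g : ℝ → ℝ) (hg : Measurable g) (hbdd : ∃ C, ∀ y, |g y| ≤ C)
    (x t s₁ s₂ T ri rj rk αi αj αk σi σj σk : ℝ)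
    (hts₁ : t < s₁) (hs₁s₂ : s₁ < s₂) (hs₂T : s₂ < T)
    (hσi : 0 < σi) (hσj : 0 < σj) (hσk : 0 < σk) :
    (∫ z₂, ∫ z₁, Real.exp (-(ri * (s₁ - t)) - rj * (s₂ - s₁)) *
        V g (x * Real.exp ((ri - αi - σi ^ 2 / 2) * (s₁ - t) + σi * Real.sqrt (s₁ - t) * z₁
              + (rj - αj - σj ^ 2 / 2) * (s₂ - s₁) + σj * Real.sqrt (s₂ - s₁) * z₂))
          rk σk (T - s₂) αk ∂stdGaussian ∂stdGaussian)
    = V g x ((ri * (s₁ - t) + rj * (s₂ - s₁) + rk * (T - s₂)) / (T - t))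
        (Real.sqrt ((σi ^ 2 * (s₁ - t) + σj ^ 2 * (s₂ - s₁) + σk ^ 2 * (T - s₂)) / (T - t)))
        (T - t)
        ((αi * (s₁ - t) + αj * (s₂ - s₁) + αk * (T - s₂)) / (T - t)) := by
  obtain ⟨C, hC⟩ := hbdd
  have hΔi : (0:ℝ) < s₁ - t := by linarith
  have hΔj : (0:ℝ) < s₂ - s₁ := by linarith
  have hΔk : (0:ℝ) < T - s₂ := by linarith
  have hTt : (0:ℝ) < T - t := by linarith
  set Δi := s₁ - t with hΔidef
  set Δj := s₂ - s₁ with hΔjdef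
  set Δk := T - s₂ with hΔkdef
  set ai := σi * Real.sqrt Δi with haidef
  set aj := σj * Real.sqrt Δj with hajdef
  set ak := σk * Real.sqrt Δk with hakdef
  have hai : ai ≠ 0 := by positivity
  have haj : aj ≠ 0 := by positivity
  have hak : ak ≠ 0 := by positivity
  set A := (ri - αi - σi ^ 2 / 2) * Δi + (rj - αj - σj ^ 2 / 2) * Δj
      + (rk - αk - σk ^ 2 / 2) * Δk with hAdef
  set F : ℝ → ℝ := fun u =>
    Real.exp (-(ri * Δi) - rj * Δj - rk * Δk) * g (x * Real.exp (A + u)) with hFdef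
  have hFmeas : Measurable F := by
    apply Measurable.const_mul
    exact hg.comp ((measurable_const.add measurable_id).exp.const_mul x)
  have hFbdd : ∀ u, |F u| ≤ Real.exp (-(ri * Δi) - rj * Δj - rk * Δk) * C := by
    intro u
    rw [hFdef]
    simp only
    rw [abs_mul, abs_of_pos (Real.exp_pos _)]
    exact mul_le_mul_of_nonneg_left (hC _) (Real.exp_pos _).le
  -- Step 1: rewrite the LHS integrand
  have step1 : ∀ z₁ z₂ : ℝ, Real.exp (-(ri * Δi) - rj * Δj) *
        V g (x * Real.exp ((ri - αi - σi ^ 2 / 2) * Δi + ai * z₁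
              + (rj - αj - σj ^ 2 / 2) * Δj + aj * z₂)) rk σk Δk αk
      = ∫ z₃, F (ak * z₃ + ai * z₁ + aj * z₂) ∂stdGaussian := by
    intro z₁ z₂
    rw [V, ← integral_const_mul]
    refine integral_congr_ae (ae_of_all _ fun z₃ => ?_)
    rw [hFdef]
    simp only
    rw [← mul_assoc, ← Real.exp_add, mul_assoc x, ← Real.exp_add]
    have e1 : -(ri*Δi) - rj*Δj + -(rk*Δk) = -(ri*Δi) - rj*Δj - rk*Δk := by ring
    have e2 : (ri - αi - σi ^ 2 / 2) * Δi + ai * z₁ + (rj - αj - σj ^ 2 / 2) * Δj + aj * z₂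
          + ((rk - αk - σk ^ 2 / 2) * Δk + σk * Real.sqrt Δk * z₃)
        = A + (ak * z₃ + ai * z₁ + aj * z₂) := by
      rw [hAdef, hakdef]; ring
    rw [e1, e2]
  -- Step 2: apply gauss_conv twice
  have step2 : ∀ z₂ : ℝ, ∫ z₁, ∫ z₃, F (ak * z₃ + ai * z₁ + aj * z₂) ∂stdGaussian ∂stdGaussian
      = ∫ z, F (Real.sqrt (ak^2 + ai^2) * z + aj * z₂) ∂stdGaussian := by
    intro z₂
    have := gauss_conv (fun u => F (u + aj * z₂))
      (hFmeas.comp (measurable_id.add_const _))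
      (Real.exp (-(ri * Δi) - rj * Δj - rk * Δk) * C) (fun y => hFbdd _) ak ai hak hai
    simpa [add_assoc] using this
  have hLHS : (∫ z₂, ∫ z₁, Real.exp (-(ri * Δi) - rj * Δj) *
        V g (x * Real.exp ((ri - αi - σi ^ 2 / 2) * Δi + ai * z₁
              + (rj - αj - σj ^ 2 / 2) * Δj + aj * z₂))
          rk σk Δk αk ∂stdGaussian ∂stdGaussian)
      = ∫ z, F (Real.sqrt (ak^2 + ai^2 + aj^2) * z) ∂stdGaussian := by
    have h1 : ∀ z₂ : ℝ, (∫ z₁, Real.exp (-(ri * Δi) - rj * Δj) *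
        V g (x * Real.exp ((ri - αi - σi ^ 2 / 2) * Δi + ai * z₁
              + (rj - αj - σj ^ 2 / 2) * Δj + aj * z₂))
          rk σk Δk αk ∂stdGaussian)
        = ∫ z, F (Real.sqrt (ak^2 + ai^2) * z + aj * z₂) ∂stdGaussian := by
      intro z₂
      rw [← step2 z₂]
      exact integral_congr_ae (ae_of_all _ fun z₁ => step1 z₁ z₂)
    rw [integral_congr_ae (ae_of_all _ h1)]
    have h2 := gauss_conv F hFmeas
      (Real.exp (-(ri * Δi) - rj * Δj - rk * Δk) * C) hFbdd
      (Real.sqrt (ak^2 + ai^2)) aj (by positivity) haj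
    rw [h2]
    congr 2
    rw [Real.sq_sqrt (by positivity)]
  rw [hLHS, V]
  have hsum : ak^2 + ai^2 + aj^2 = σi^2*Δi + σj^2*Δj + σk^2*Δk := by
    rw [haidef, hajdef, hakdef, mul_pow, mul_pow, mul_pow,
      Real.sq_sqrt hΔi.le, Real.sq_sqrt hΔj.le, Real.sq_sqrt hΔk.le]
    ring
  have hS : (0:ℝ) ≤ σi^2*Δi + σj^2*Δj + σk^2*Δk := by positivity
  refine integral_congr_ae (ae_of_all _ fun z => ?_)
  rw [hFdef]
  simp only
  have habar : Real.sqrt ((σi^2*Δi + σj^2*Δj + σk^2*Δk)/(T-t)) * Real.sqrt (T-t)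
      = Real.sqrt (σi^2*Δi + σj^2*Δj + σk^2*Δk) := by
    rw [← Real.sqrt_mul (by positivity), div_mul_cancel₀ _ hTt.ne']
  have e1 : -(ri*Δi) - rj*Δj - rk*Δk
      = -((ri * Δi + rj * Δj + rk * Δk) / (T - t) * (T - t)) := by
    rw [div_mul_cancel₀ _ hTt.ne']; ring
  have e2 : A + Real.sqrt (ak^2 + ai^2 + aj^2) * z
      = ((ri * Δi + rj * Δj + rk * Δk) / (T - t)
          - (αi * Δi + αj * Δj + αk * Δk) / (T - t)
          - (Real.sqrt ((σi ^ 2 * Δi + σj ^ 2 * Δj + σk ^ 2 * Δk) / (T - t))) ^ 2 / 2) * (T - t)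
        + Real.sqrt ((σi ^ 2 * Δi + σj ^ 2 * Δj + σk ^ 2 * Δk) / (T - t)) * Real.sqrt (T-t) * z := by
    rw [hsum, hAdef, Real.sq_sqrt (by positivity), habar]
    field_simp
    ring
  rw [e1, e2]
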